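/- For every finite simple graph G = (V,E) on n ≥ 2 vertices and every integer t ≥ 1, there exists an ordered partition C_1, …, C_k of V into nonempty clusters such that every cluster C_i has weak diameter at most 4t·⌈log₂ n⌉ + 4, and the partition has (1/t)-cluster-degeneracy, i.e., for every i, |{ v ∈ C_i : dist_G(v, V \ (C_1 ∪ … ∪ C_i)) ≤ 2 }| ≤ |C_i| / t. -/

import Mathlib

open SimpleGraph

variable {V : Type*}

/-- The set of "close-to-boundary" vertices of the `i`-th cluster of an ordered partition:
vertices of `C i` at distance at most `2` from `V \ (C 1 ∪ … ∪ C i)`. -/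
def closeSet (G : SimpleGraph V) {k : ℕ} (C : Fin k → Set V) (i : Fin k) : Set V :=
  {v ∈ C i | ∃ u : V, (∀ j : Fin k, j ≤ i → u ∉ C j) ∧ G.edist v u ≤ (2 : ℕ∞)}

lemma keyGrowth (t n : ℕ) (ht : 1 ≤ t) (hn : 2 ≤ n) (g : ℕ → ℕ)
    (hg0 : 1 ≤ g 0) (hgn : ∀ j, g j ≤ n) :
    ∃ j : ℕ, j + 1 ≤ t * Nat.clog 2 n ∧ (t - 1) * g (j + 1) ≤ t * g j := by
  by_contra hcon
  push_neg at hcon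
  have hclog : 0 < Nat.clog 2 n := Nat.clog_pos one_lt_two hn
  have hm : 1 ≤ t * Nat.clog 2 n := Nat.one_le_iff_ne_zero.2
    (Nat.mul_ne_zero (by omega) (by omega))
  rcases Nat.lt_or_ge t 2 with ht1 | ht2
  · have h0 := hcon 0 hm
    have : t = 1 := by omega
    subst this
    simp at h0
  set m := t * Nat.clog 2 n with hmdef
  have htR : (2 : ℝ) ≤ (t : ℝ) := by exact_mod_cast ht2
  have htm1pos : (0 : ℝ) < (t : ℝ) - 1 := by linarith
  set a : ℝ := (t : ℝ) / ((t : ℝ) - 1) with hadef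
  have ha1 : 1 < a := by rw [hadef, lt_div_iff₀ htm1pos]; linarith
  have hrec : ∀ j : ℕ, j + 1 ≤ m → (t : ℝ) * g j < ((t : ℝ) - 1) * g (j + 1) := by
    intro j hj
    have h1 := hcon j hj
    have hcast : ((t : ℕ) : ℝ) * (g j : ℝ) < (((t - 1 : ℕ)) : ℝ) * (g (j+1) : ℝ) := by
      exact_mod_cast h1
    have heq : (((t - 1 : ℕ)) : ℝ) = (t : ℝ) - 1 := by
      push_cast [Nat.cast_sub ht]; ring
    rw [heq] at hcast; exact hcast
  have hstep : ∀ j : ℕ, j + 1 ≤ m → a * (g j : ℝ) < (g (j + 1) : ℝ) := by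
    intro j hj
    have h := hrec j hj
    rw [hadef, div_mul_eq_mul_div, div_lt_iff₀ htm1pos]
    linarith
  have hind : ∀ j : ℕ, 1 ≤ j → j ≤ m → a ^ j < (g j : ℝ) := by
    intro j
    induction j with
    | zero => omega
    | succ j ih =>
      intro _ hj
      rcases Nat.eq_zero_or_pos j with hj0 | hj1
      · subst hj0
        have h1 := hstep 0 hj
        have hg0R : (1 : ℝ) ≤ (g 0 : ℝ) := by exact_mod_cast hg0
        calc a ^ 1 = a * 1 := by ring
          _ ≤ a * (g 0 : ℝ) := mul_le_mul_of_nonneg_left hg0R (by linarith)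
          _ < (g 1 : ℝ) := h1
      · have hIH := ih hj1 (by omega)
        have h1 := hstep j hj
        calc a ^ (j + 1) = a * a ^ j := by ring
          _ < a * (g j : ℝ) := mul_lt_mul_of_pos_left hIH (by linarith)
          _ < (g (j + 1) : ℝ) := h1
  have hfinal := hind m hm le_rfl
  have hat : (2 : ℝ) ≤ a ^ t := by
    have hx : (0:ℝ) < 1 / ((t:ℝ) - 1) := by positivity
    have hb := one_add_mul_le_pow (a := 1 / ((t:ℝ)-1)) (by linarith) t
    have h2 : (2 : ℝ) ≤ 1 + (t:ℝ) * (1 / ((t:ℝ)-1)) := by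
      have : 1 ≤ (t:ℝ) * (1 / ((t:ℝ)-1)) := by
        rw [mul_one_div, le_div_iff₀ htm1pos]; linarith
      linarith
    have haeq : (1 : ℝ) + 1 / ((t:ℝ)-1) = a := by
      rw [hadef]; field_simp; ring
    rw [haeq] at hb
    linarith
  have hpow : (n : ℝ) ≤ a ^ m := by
    have h1 : (n : ℝ) ≤ (2 : ℝ) ^ Nat.clog 2 n := by
      exact_mod_cast Nat.le_pow_clog one_lt_two n
    have h2 : ((2:ℝ)) ^ Nat.clog 2 n ≤ (a ^ t) ^ Nat.clog 2 n :=
      pow_le_pow_left₀ (by norm_num) hat _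
    rw [← pow_mul] at h2
    exact h1.trans (by rw [hmdef]; exact h2)
  have hgm : (g m : ℝ) ≤ (n : ℝ) := by exact_mod_cast hgn m
  linarith


def unionL : List (Set V) → Set V
  | [] => ∅
  | C :: L => C ∪ unionL L

def PGood (G : SimpleGraph V) (t D : ℕ) : List (Set V) → Prop
  | [] => True
  | C :: L => C.Nonempty ∧ (∀ u ∈ C, ∀ w ∈ C, G.edist u w ≤ (D : ℕ∞)) ∧
      Disjoint C (unionL L) ∧
      t * ({x ∈ C | ∃ u ∈ unionL L, G.edist x u ≤ (2 : ℕ∞)}.ncard) ≤ C.ncard ∧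
      PGood G t D L

lemma mem_unionL {x : V} : ∀ {L : List (Set V)}, x ∈ unionL L ↔ ∃ S ∈ L, x ∈ S
  | [] => by simp [unionL]
  | C :: L => by
    simp only [unionL, Set.mem_union, List.mem_cons]
    constructor
    · rintro (h | h)
      · exact ⟨C, Or.inl rfl, h⟩
      · obtain ⟨S, hS, hx⟩ := mem_unionL.1 h
        exact ⟨S, Or.inr hS, hx⟩
    · rintro ⟨S, (rfl | hS), hx⟩
      · exact Or.inl hx
      · exact Or.inr (mem_unionL.2 ⟨S, hS, hx⟩)

lemma getElem_subset_unionL : ∀ (L : List (Set V)) (i : ℕ) (h : i < L.length),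
    L[i] ⊆ unionL L := by
  intro L i h x hx
  exact mem_unionL.2 ⟨L[i], List.getElem_mem h, hx⟩

lemma PGood_drop {G : SimpleGraph V} {t D : ℕ} :
    ∀ (n : ℕ) (L : List (Set V)), PGood G t D L → PGood G t D (L.drop n) := by
  intro n
  induction n with
  | zero => intro L h; simpa using h
  | succ n ih =>
    intro L h
    cases L with
    | nil => simpa using h
    | cons C L =>
      rw [List.drop_succ_cons]
      exact ih L h.2.2.2.2
lemma exists_list [Fintype V] (G : SimpleGraph V) (t : ℕ) (ht : 1 ≤ t)
    (hn : 2 ≤ Fintype.card V) :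
    ∀ N : ℕ, ∀ R : Set V, R.ncard ≤ N →
      ∃ L : List (Set V), PGood G t (4 * t * Nat.clog 2 (Fintype.card V) + 4) L ∧ unionL L = R := by
  intro N
  induction N with
  | zero =>
    intro R hR
    have : R = ∅ := by
      rw [← Set.ncard_eq_zero R.toFinite]; omega
    exact ⟨[], trivial, this.symm⟩
  | succ N ih =>
    intro R hR
    rcases R.eq_empty_or_nonempty with hRe | ⟨v, hv⟩
    · exact ⟨[], trivial, hRe.symm⟩
    set n := Fintype.card V with hndef
    -- growth function
    set g : ℕ → ℕ := fun j => ({x ∈ R | G.edist v x ≤ ((2 * j : ℕ) : ℕ∞)}).ncard with hgdef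
    have hg0 : 1 ≤ g 0 := by
      rw [hgdef]
      have : v ∈ {x ∈ R | G.edist v x ≤ ((2 * 0 : ℕ) : ℕ∞)} := by
        refine ⟨hv, ?_⟩
        simp [SimpleGraph.edist_self]
      exact (Set.ncard_pos (Set.toFinite _)).2 ⟨v, this⟩
    have hgn : ∀ j, g j ≤ n := by
      intro j
      calc g j ≤ (Set.univ : Set V).ncard := Set.ncard_le_ncard (Set.subset_univ _)
        _ = n := by rw [Set.ncard_univ, hndef, Nat.card_eq_fintype_card]
    obtain ⟨j, hjm, hjineq⟩ := keyGrowth t n ht hn g hg0 hgn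
    set C : Set V := {x ∈ R | G.edist v x ≤ ((2 * (j+1) : ℕ) : ℕ∞)} with hCdef
    set A : Set V := {x ∈ R | G.edist v x ≤ ((2 * j : ℕ) : ℕ∞)} with hAdef
    have hCsub : C ⊆ R := fun x hx => hx.1
    have hvC : v ∈ C := ⟨hv, by simp [SimpleGraph.edist_self]⟩
    have hAC : A ⊆ C := by
      intro x hx
      refine ⟨hx.1, hx.2.trans ?_⟩
      have h5 : (2*j : ℕ) ≤ 2*(j+1) := by omega
      exact_mod_cast h5
    -- recurse
    have hlt : (R \ C).ncard ≤ N := by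
      have : (R \ C).ncard < R.ncard := by
        apply Set.ncard_lt_ncard _ R.toFinite
        constructor
        · exact Set.diff_subset
        · intro hsub
          exact (hsub hv).2 hvC
      omega
    obtain ⟨L, hL, hLu⟩ := ih (R \ C) hlt
    refine ⟨C :: L, ⟨⟨v, hvC⟩, ?_, ?_, ?_, hL⟩, ?_⟩
    · -- diameter
      intro u hu w hw
      have h1 : G.edist u w ≤ G.edist u v + G.edist v w := SimpleGraph.edist_triangle
      have h2 : G.edist u v = G.edist v u := SimpleGraph.edist_comm
      have hub : G.edist v u ≤ ((2 * (j+1) : ℕ) : ℕ∞) := hu.2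
      have hwb : G.edist v w ≤ ((2 * (j+1) : ℕ) : ℕ∞) := hw.2
      calc G.edist u w ≤ G.edist u v + G.edist v w := h1
        _ ≤ ((2 * (j+1) : ℕ) : ℕ∞) + ((2 * (j+1) : ℕ) : ℕ∞) := by
            rw [h2]; exact add_le_add hub hwb
        _ ≤ ((4 * t * Nat.clog 2 n + 4 : ℕ) : ℕ∞) := by
            rw [← Nat.cast_add]
            apply Nat.cast_le.2
            have h5 : 4 * t * Nat.clog 2 n = 4 * (t * Nat.clog 2 n) := by ring
            omega
    · -- disjoint
      rw [hLu]
      exact Set.disjoint_sdiff_right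
    · -- close count
      rw [hLu]
      have hclose : {x ∈ C | ∃ u ∈ R \ C, G.edist x u ≤ (2 : ℕ∞)} ⊆ C \ A := by
        rintro x ⟨hxC, u, huRC, hxu⟩
        refine ⟨hxC, fun hxA => ?_⟩
        have huR : u ∈ R := huRC.1
        have huC : u ∉ C := huRC.2
        apply huC
        refine ⟨huR, ?_⟩
        calc G.edist v u ≤ G.edist v x + G.edist x u := SimpleGraph.edist_triangle
          _ ≤ ((2 * j : ℕ) : ℕ∞) + (2 : ℕ∞) := add_le_add hxA.2 hxu
          _ = ((2 * (j+1) : ℕ) : ℕ∞) := by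
              push_cast
              ring
      have h1 : ({x ∈ C | ∃ u ∈ R \ C, G.edist x u ≤ (2 : ℕ∞)}).ncard ≤ (C \ A).ncard :=
        Set.ncard_le_ncard hclose (C \ A).toFinite
      have h2 : (C \ A).ncard = C.ncard - A.ncard := Set.ncard_diff hAC A.toFinite
      have h3 : (t - 1) * C.ncard ≤ t * A.ncard := hjineq
      have h4 : A.ncard ≤ C.ncard := Set.ncard_le_ncard hAC C.toFinite
      calc t * ({x ∈ C | ∃ u ∈ R \ C, G.edist x u ≤ (2 : ℕ∞)}).ncard
          ≤ t * (C.ncard - A.ncard) := by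
            apply Nat.mul_le_mul_left
            omega
        _ ≤ C.ncard := by
            rw [Nat.mul_sub, tsub_le_iff_right]
            have he : t * C.ncard = (t - 1) * C.ncard + C.ncard := by
              conv_lhs => rw [show t = (t - 1) + 1 by omega]
              rw [add_mul, one_mul]
            rw [he]
            omega
    · -- union
      show C ∪ unionL L = R
      rw [hLu, Set.union_diff_cancel hCsub]

theorem stmt5 [Fintype V] (G : SimpleGraph V) (t : ℕ) (ht : 1 ≤ t)
    (hn : 2 ≤ Fintype.card V) :
    ∃ (k : ℕ) (C : Fin k → Set V),
      (∀ i, (C i).Nonempty) ∧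
      Pairwise (Function.onFun Disjoint C) ∧
      (⋃ i, C i) = Set.univ ∧
      (∀ i, ∀ u ∈ C i, ∀ w ∈ C i,
        G.edist u w ≤ ((4 * t * Nat.clog 2 (Fintype.card V) + 4 : ℕ) : ℕ∞)) ∧
      (∀ i, ((closeSet G C i).ncard : ℝ) ≤ ((C i).ncard : ℝ) / (t : ℝ)) := by
  obtain ⟨L, hL, hLu⟩ := exists_list G t ht hn (Set.univ : Set V).ncard Set.univ le_rfl
  set D := 4 * t * Nat.clog 2 (Fintype.card V) + 4 with hDdef
  have hfacts : ∀ i : Fin L.length,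
      PGood G t D (L[(i : ℕ)] :: L.drop ((i : ℕ) + 1)) := by
    intro i
    have h := PGood_drop (i : ℕ) L hL
    rwa [List.drop_eq_getElem_cons i.isLt] at h
  have hsubdrop : ∀ (i j : Fin L.length), (i : ℕ) < (j : ℕ) →
      L[(j : ℕ)] ⊆ unionL (L.drop ((i : ℕ) + 1)) := by
    intro i j hij
    have hlen : (j : ℕ) - ((i : ℕ) + 1) < (L.drop ((i : ℕ) + 1)).length := by
      rw [List.length_drop]
      have := j.isLt
      omega
    have heq : (L.drop ((i : ℕ) + 1))[(j : ℕ) - ((i : ℕ) + 1)] = L[(j : ℕ)] := by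
      rw [List.getElem_drop]
      congr 1
      omega
    rw [← heq]
    exact getElem_subset_unionL _ _ hlen
  have hdisj : ∀ (i j : Fin L.length), (i : ℕ) < (j : ℕ) →
      Disjoint L[(i : ℕ)] L[(j : ℕ)] := by
    intro i j hij
    exact ((hfacts i).2.2.1).mono_right (hsubdrop i j hij)
  refine ⟨L.length, fun i => L[i], ?_, ?_, ?_, ?_, ?_⟩
  · intro i
    exact (hfacts i).1
  · intro i j hij
    rcases Nat.lt_or_ge (i : ℕ) (j : ℕ) with h | h
    · exact hdisj i j h
    · have h2 : (j : ℕ) < (i : ℕ) := by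
        rcases Nat.lt_or_ge (j : ℕ) (i : ℕ) with h2 | h2
        · exact h2
        · exact absurd (Fin.ext (by omega)) hij
      exact (hdisj j i h2).symm
  · ext x
    simp only [Set.mem_iUnion, Set.mem_univ, iff_true]
    have hx : x ∈ unionL L := by rw [hLu]; trivial
    obtain ⟨S, hS, hxS⟩ := mem_unionL.1 hx
    obtain ⟨m, hm, rfl⟩ := List.mem_iff_getElem.1 hS
    exact ⟨⟨m, hm⟩, hxS⟩
  · intro i
    exact (hfacts i).2.1
  · intro i
    have hkey : t * ({x ∈ L[(i : ℕ)] |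
        ∃ u ∈ unionL (L.drop ((i : ℕ) + 1)), G.edist x u ≤ (2 : ℕ∞)}.ncard)
        ≤ L[(i : ℕ)].ncard := (hfacts i).2.2.2.1
    have hsub : closeSet G (fun i : Fin L.length => L[(i : ℕ)]) i ⊆
        {x ∈ L[(i : ℕ)] | ∃ u ∈ unionL (L.drop ((i : ℕ) + 1)), G.edist x u ≤ (2 : ℕ∞)} := by
      rintro x ⟨hxC, u, hu, hxu⟩
      refine ⟨hxC, u, ?_, hxu⟩
      have hx : u ∈ unionL L := by rw [hLu]; trivial
      obtain ⟨S, hS, hxS⟩ := mem_unionL.1 hx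
      obtain ⟨m, hm, rfl⟩ := List.mem_iff_getElem.1 hS
      have him : (i : ℕ) < m := by
        by_contra hcon
        exact hu ⟨m, hm⟩ (Fin.le_def.2 (Nat.le_of_not_lt hcon)) hxS
      exact hsubdrop i ⟨m, hm⟩ him hxS
    have h1 : (closeSet G (fun i : Fin L.length => L[(i : ℕ)]) i).ncard
        ≤ ({x ∈ L[(i : ℕ)] | ∃ u ∈ unionL (L.drop ((i : ℕ) + 1)),
            G.edist x u ≤ (2 : ℕ∞)}.ncard) := Set.ncard_le_ncard hsub (Set.toFinite _)
    have h2 : t * (closeSet G (fun i : Fin L.length => L[(i : ℕ)]) i).ncard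
        ≤ L[(i : ℕ)].ncard := le_trans (Nat.mul_le_mul_left t h1) hkey
    have htpos : (0 : ℝ) < (t : ℝ) := by exact_mod_cast ht
    rw [le_div_iff₀ htpos]
    calc ((closeSet G (fun i : Fin L.length => L[(i : ℕ)]) i).ncard : ℝ) * (t : ℝ)
        = ((t * (closeSet G (fun i : Fin L.length => L[(i : ℕ)]) i).ncard : ℕ) : ℝ) := by
          push_cast; ring
      _ ≤ (L[(i : ℕ)].ncard : ℝ) := by exact_mod_cast h2
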